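/- Let f be a monic real polynomial of degree n ≥ 1 satisfying Assumption 1, with even/odd splitting f = p − q, and let α > 0 be a simple real root of f with f'(α) > 0 (equivalently p'(α) > q'(α)). Then there exist δ > 0 and ℓ ∈ [0, 1) such that for every x₀ with α < x₀ < α + δ, the sequence defined by x_{t+1} = x_t · q(x_t)/p(x_t) satisfies 0 ≤ x_{t+1} − α ≤ ℓ · (x_t − α) for all t ≥ 0; in particular x_t converges to α at a linear rate. -/

import Mathlib

open Filter
open Polynomial


lemma aux_abs_sub_le_abs_add {x : ℝ} (hx : 0 < x) {w : ℂ} (hw : 0 ≤ w.re) :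
    ‖(x : ℂ) - w‖ ≤ ‖(x : ℂ) + w‖ := by
  have h1 : Complex.normSq ((x : ℂ) - w) = (x - w.re) ^ 2 + w.im ^ 2 := by
    simp [Complex.normSq_apply, Complex.sub_re, Complex.sub_im]; ring
  have h2 : Complex.normSq ((x : ℂ) + w) = (x + w.re) ^ 2 + w.im ^ 2 := by
    simp [Complex.normSq_apply, Complex.add_re, Complex.add_im]; ring
  have s1 := Complex.sq_norm ((x : ℂ) - w)
  have s2 := Complex.sq_norm ((x : ℂ) + w)
  nlinarith [norm_nonneg ((x : ℂ) - w), norm_nonneg ((x : ℂ) + w)]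

lemma aux_pos_of_no_root (G : Polynomial ℝ) (hG : G.Monic)
    (hnr : ∀ x : ℝ, 0 < x → G.eval x ≠ 0) : ∀ x : ℝ, 0 < x → 0 < G.eval x := by
  intro x hx
  rcases eq_or_ne G.natDegree 0 with h0 | h0
  · have : G = 1 := hG.natDegree_eq_zero.mp h0
    simp [this]
  · have hdeg : 0 < G.degree := by
      rw [Polynomial.degree_eq_natDegree hG.ne_zero]
      exact_mod_cast Nat.pos_of_ne_zero h0
    have htop : Tendsto (fun y => G.eval y) atTop atTop :=
      G.tendsto_atTop_of_leadingCoeff_nonneg hdeg (by simp [hG.leadingCoeff])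
    by_contra hle
    push_neg at hle
    have hlt : G.eval x < 0 := lt_of_le_of_ne hle (hnr x hx)
    obtain ⟨y, hy⟩ := (htop.eventually_ge_atTop 1).and (eventually_ge_atTop x) |>.exists
    have hsub : Set.Icc (G.eval x) (G.eval y) ⊆ (fun z => G.eval z) '' Set.Icc x y :=
      intermediate_value_Icc hy.2 (G.continuous_aeval.continuousOn)
    obtain ⟨z, hz, hz0⟩ := hsub ⟨le_of_lt hlt, by linarith [hy.1]⟩
    exact hnr z (lt_of_lt_of_le hx hz.1) hz0

/-- Let `f` be a monic real polynomial of degree `n ≥ 1` satisfying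
Assumption 1, with even/odd splitting `f = p - q`, and let `α > 0` be a simple real root
of `f` with `f'(α) > 0`. Then there exist `δ > 0` and `ℓ ∈ [0, 1)` such that for every
`x₀` with `α < x₀ < α + δ`, the sequence `x (t+1) = x t * q (x t) / p (x t)` started at
`x₀` satisfies `0 ≤ x (t+1) - α ≤ ℓ * (x t - α)` for all `t`; in particular it converges
to `α` (at a linear rate). -/
theorem stmt12 (f : Polynomial ℝ) (n : ℕ) (hn : 1 ≤ n)
    (hmonic : f.Monic) (hdeg : f.natDegree = n)
    (has1 : ∀ z : ℂ, (Polynomial.aeval z) f = 0 → 0 ≤ z.re)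
    (has2 : ∃ z : ℂ, (Polynomial.aeval z) f = 0 ∧ 0 < z.re)
    (p q : ℝ → ℝ)
    (hp : ∀ x : ℝ, p x =
      ∑ j ∈ Finset.range (n + 1), if (n + j) % 2 = 0 then f.coeff j * x ^ j else 0)
    (hq : ∀ x : ℝ, q x =
      ∑ j ∈ Finset.range (n + 1), if (n + j) % 2 = 1 then -(f.coeff j) * x ^ j else 0)
    (α : ℝ) (hα : 0 < α) (hroot : f.IsRoot α)
    (hderiv : 0 < (Polynomial.derivative f).eval α) :
    ∃ δ > (0 : ℝ), ∃ ℓ : ℝ, 0 ≤ ℓ ∧ ℓ < 1 ∧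
      ∀ x₀ : ℝ, α < x₀ → x₀ < α + δ →
        ∀ x : ℕ → ℝ, x 0 = x₀ →
          (∀ t : ℕ, x (t + 1) = x t * q (x t) / p (x t)) →
          (∀ t : ℕ, 0 ≤ x (t + 1) - α ∧ x (t + 1) - α ≤ ℓ * (x t - α)) ∧
            Tendsto x atTop (nhds α) := by
  obtain ⟨m, rfl⟩ : ∃ m, n = m + 1 := ⟨n - 1, (Nat.succ_pred_eq_of_pos hn).symm⟩
  set h : Polynomial ℝ := f /ₘ (X - C α) with hh
  have hfact : (X - C α) * h = f := (mul_divByMonic_eq_iff_isRoot).mpr hroot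
  have hfne : f ≠ 0 := hmonic.ne_zero
  have hhm : h.Monic := by
    have := hfact ▸ hmonic
    exact (Polynomial.monic_X_sub_C α).of_mul_monic_left this
  -- h.eval α = f'(α) > 0
  have hhα : 0 < h.eval α := by
    have hdf : Polynomial.derivative f
        = Polynomial.derivative (X - C α) * h + (X - C α) * Polynomial.derivative h := by
      rw [← hfact, Polynomial.derivative_mul]
    have : (Polynomial.derivative f).eval α = h.eval α := by rw [hdf]; simp
    linarith [this.symm.le]
  -- real roots of things
  have hfx : ∀ x : ℝ, f.eval x = (x - α) * h.eval x := by
    intro x; rw [← hfact]; simp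
  -- complex picture
  set hC : Polynomial ℂ := h.map (algebraMap ℝ ℂ) with hhC
  have hCm : hC.Monic := hhm.map _
  have hCval : ∀ r : ℝ, hC.eval (r : ℂ) = ((h.eval r : ℝ) : ℂ) := by
    intro r
    rw [hhC, Polynomial.eval_map]
    exact Polynomial.eval₂_at_apply (algebraMap ℝ ℂ) r
  have hre : ∀ w ∈ hC.roots, 0 ≤ w.re := by
    intro w hw
    have hwr : hC.eval w = 0 := by
      have := Polynomial.isRoot_of_mem_roots hw; exact this
    have haw : (Polynomial.aeval w) h = 0 := by
      rwa [Polynomial.aeval_def, ← Polynomial.eval_map]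
    apply has1 w
    have : (Polynomial.aeval w) f = (w - (α : ℂ)) * (Polynomial.aeval w) h := by
      rw [← hfact]; simp
    rw [this, haw, mul_zero]
  have hCsplit : hC = (hC.roots.map fun w => X - C w).prod :=
    (IsAlgClosed.splits hC).eq_prod_roots_of_monic hCm
  have habs : ∀ z : ℂ, ‖hC.eval z‖
      = (hC.roots.map fun w => ‖z - w‖).prod := by
    intro z
    have hn : ∀ s : Multiset ℂ, ‖s.prod‖ = (s.map (‖·‖)).prod := fun s => by
      induction s using Multiset.induction_on with
      | empty => simp
      | cons a s ih => rw [Multiset.prod_cons, Multiset.map_cons, Multiset.prod_cons, norm_mul, ih]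
    conv_lhs => rw [hCsplit]
    rw [Polynomial.eval_multiset_prod, Multiset.map_map, hn,
      Multiset.map_map]
    congr 1
    exact Multiset.map_congr rfl (fun w _ => by
      simp [Function.comp, Polynomial.eval_sub])
  -- key absolute value inequality
  have hkeyabs : ∀ x : ℝ, 0 < x → |h.eval x| ≤ |h.eval (-x)| := by
    intro x hx
    have e1 : |h.eval x| = ‖hC.eval (x : ℂ)‖ := by
      rw [hCval]; simp
    have e2 : |h.eval (-x)| = ‖hC.eval ((-x : ℝ) : ℂ)‖ := by
      rw [hCval]; simp
    rw [e1, e2, habs, habs]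
    apply Multiset.prod_map_le_prod_map₀
    · intro w _; exact norm_nonneg _
    · intro w hw
      have : ((-x : ℝ) : ℂ) - w = -((x : ℂ) + w) := by push_cast; ring
      rw [this, norm_neg]
      exact aux_abs_sub_le_abs_add hx (hre w hw)
  -- positivity of the reflected polynomial
  have hfC : ∀ r : ℝ, (Polynomial.aeval ((r : ℝ) : ℂ)) f = ((f.eval r : ℝ) : ℂ) := by
    intro r
    rw [Polynomial.aeval_def]
    exact Polynomial.eval₂_at_apply (algebraMap ℝ ℂ) r
  have hhdeg : h.natDegree = m := by
    have h1 : (X - C α : Polynomial ℝ) ≠ 0 := (Polynomial.monic_X_sub_C α).ne_zero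
    have h2 : h ≠ 0 := hhm.ne_zero
    have := Polynomial.natDegree_mul h1 h2
    rw [hfact, hdeg, Polynomial.natDegree_X_sub_C] at this
    omega
  have hnoroot : ∀ x : ℝ, 0 < x → h.eval (-x) ≠ 0 := by
    intro x hx hc
    have hf0 : f.eval (-x) = 0 := by rw [hfx, hc, mul_zero]
    have := has1 ((-x : ℝ) : ℂ) (by rw [hfC, hf0]; simp)
    simp at this
    linarith
  have hHpos : ∀ x : ℝ, 0 < x → 0 < (-1 : ℝ) ^ m * h.eval (-x) := by
    rcases eq_or_ne m 0 with hm0 | hm0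
    · intro x hx
      have h1 : h = 1 := hhm.natDegree_eq_zero.mp (by rw [hhdeg, hm0])
      simp [h1, hm0]
    · set G : Polynomial ℝ := C ((-1 : ℝ) ^ m) * (h.comp (-X)) with hG
      have hGeval : ∀ x : ℝ, G.eval x = (-1 : ℝ) ^ m * h.eval (-x) := by
        intro x; rw [hG]; simp [Polynomial.eval_comp]
      have hGC : G.Monic := by
        rw [hG]
        have hnd : (-X : Polynomial ℝ).natDegree ≠ 0 := by
          simp [Polynomial.natDegree_neg]
        have hlc : (h.comp (-X)).leadingCoeff = (-1 : ℝ) ^ m := by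
          rw [Polynomial.leadingCoeff_comp hnd]
          simp [hhm.leadingCoeff, Polynomial.leadingCoeff_neg, hhdeg]
        have : G.leadingCoeff = 1 := by
          rw [hG, Polynomial.leadingCoeff_mul, Polynomial.leadingCoeff_C, hlc,
            ← mul_pow]
          norm_num
        exact this
      intro x hx
      rw [← hGeval]
      refine aux_pos_of_no_root G hGC (fun y hy hc => ?_) x hx
      rw [hGeval] at hc
      have : h.eval (-y) = 0 := by
        rcases mul_eq_zero.mp hc with h1 | h1
        · exact absurd h1 (pow_ne_zero _ (by norm_num))
        · exact h1
      exact hnoroot y hy this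
  have hHge : ∀ x : ℝ, 0 < x → |h.eval x| ≤ (-1 : ℝ) ^ m * h.eval (-x) := by
    intro x hx
    have h1 : |h.eval (-x)| = (-1 : ℝ) ^ m * h.eval (-x) := by
      rw [← abs_of_pos (hHpos x hx), abs_mul, abs_pow]
      norm_num
    rw [← h1]
    exact hkeyabs x hx
  -- expressions for p and q
  have hfeval : ∀ x : ℝ, f.eval x = ∑ j ∈ Finset.range (m + 1 + 1), f.coeff j * x ^ j := by
    intro x
    exact Polynomial.eval_eq_sum_range' (by omega) x
  have hpeval : ∀ x : ℝ, p x = (f.eval x + (-1 : ℝ) ^ (m + 1) * f.eval (-x)) / 2 := by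
    intro x
    rw [hp, hfeval x, hfeval (-x), Finset.mul_sum, ← Finset.sum_add_distrib,
      Finset.sum_div]
    refine Finset.sum_congr rfl fun j _ => ?_
    have hnp : (-x) ^ j = (-1 : ℝ) ^ j * x ^ j := by rw [neg_pow]
    rcases Nat.mod_two_eq_zero_or_one (m + 1 + j) with h2 | h2
    · rw [if_pos h2, hnp]
      have e2 : (-1 : ℝ) ^ j * (-1 : ℝ) ^ m = -1 := by
        rw [← pow_add]
        exact Odd.neg_one_pow (Nat.odd_iff.mpr (by omega))
      linear_combination (f.coeff j * x ^ j / 2) * e2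
    · rw [if_neg (by omega), hnp]
      have e2 : (-1 : ℝ) ^ j * (-1 : ℝ) ^ m = 1 := by
        rw [← pow_add]
        exact Even.neg_one_pow (Nat.even_iff.mpr (by omega))
      linear_combination (f.coeff j * x ^ j / 2) * e2
  have hqp : ∀ x : ℝ, q x = p x - f.eval x := by
    intro x
    rw [hq, hp, hfeval x, ← Finset.sum_sub_distrib]
    refine Finset.sum_congr rfl fun j _ => ?_
    rcases Nat.mod_two_eq_zero_or_one (m + 1 + j) with h2 | h2
    · rw [if_neg (by omega), if_pos h2]; ring
    · rw [if_pos h2, if_neg (by omega)]; ring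
  have hp2 : ∀ x : ℝ, p x
      = ((x - α) * h.eval x + (x + α) * ((-1 : ℝ) ^ m * h.eval (-x))) / 2 := by
    intro x
    rw [hpeval, hfx x, hfx (-x), pow_succ]
    ring
  -- positivity of p and the key nonnegativity
  have hppos : ∀ x : ℝ, 0 < x → 0 < p x := by
    intro x hx
    rw [hp2]
    have hH := hHpos x hx
    have hle := hHge x hx
    have habs2 : |x - α| < x + α := abs_lt.mpr ⟨by linarith, by linarith⟩
    have c1 : |x - α| * |h.eval x| ≤ |x - α| * ((-1 : ℝ) ^ m * h.eval (-x)) :=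
      mul_le_mul_of_nonneg_left hle (abs_nonneg _)
    have c2 : |x - α| * ((-1 : ℝ) ^ m * h.eval (-x))
        < (x + α) * ((-1 : ℝ) ^ m * h.eval (-x)) :=
      mul_lt_mul_of_pos_right habs2 hH
    have c3 : -(|x - α| * |h.eval x|) ≤ (x - α) * h.eval x := by
      rw [← abs_mul]; exact neg_abs_le _
    linarith
  have hkeynn : ∀ x : ℝ, 0 < x → 0 ≤ p x - x * h.eval x := by
    intro x hx
    rw [hp2]
    have hle2 : h.eval x ≤ (-1 : ℝ) ^ m * h.eval (-x) :=
      le_trans (le_abs_self _) (hHge x hx)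
    nlinarith
  -- the one-step identity
  have hstep : ∀ x : ℝ, 0 < x →
      x * q x / p x - α = (x - α) * ((p x - x * h.eval x) / p x) := by
    intro x hx
    have hpx : p x ≠ 0 := (hppos x hx).ne'
    rw [hqp, hfx]
    field_simp
    ring
  -- continuity of ratio
  set r : ℝ → ℝ := fun y => (p y - y * h.eval y) / p y with hr
  have hcontp : Continuous p := by
    have : p = fun x => ∑ j ∈ Finset.range (m + 1 + 1),
        if (m + 1 + j) % 2 = 0 then f.coeff j * x ^ j else 0 := funext hp
    rw [this]
    apply continuous_finset_sum
    intro j _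
    split_ifs
    · exact (continuous_const.mul (continuous_pow j))
    · exact continuous_const
  have hrcont : ContinuousAt r α := by
    apply ContinuousAt.div
    · exact (hcontp.sub (continuous_id.mul h.continuous_aeval)).continuousAt
    · exact hcontp.continuousAt
    · exact (hppos α hα).ne'
  have hrα0 : 0 ≤ r α := div_nonneg (hkeynn α hα) (hppos α hα).le
  have hrα1 : r α < 1 := by
    rw [hr]
    simp only
    rw [div_lt_one (hppos α hα)]
    nlinarith [mul_pos hα hhα]
  set ℓ : ℝ := (r α + 1) / 2 with hℓ
  have hℓ0 : 0 ≤ ℓ := by rw [hℓ]; linarith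
  have hℓ1 : ℓ < 1 := by rw [hℓ]; linarith
  have hrℓ : r α < ℓ := by rw [hℓ]; linarith
  have hnhds : r ⁻¹' Set.Iio ℓ ∈ nhds α := hrcont (Iio_mem_nhds hrℓ)
  obtain ⟨δ, hδpos, hball⟩ := Metric.mem_nhds_iff.mp hnhds
  refine ⟨δ, hδpos, ℓ, hℓ0, hℓ1, ?_⟩
  intro x₀ hx₀l hx₀r x hx0 hxrec
  have step : ∀ t : ℕ, α ≤ x t → x t - α ≤ ℓ ^ t * (x₀ - α) →
      0 ≤ x (t + 1) - α ∧ x (t + 1) - α ≤ ℓ * (x t - α) := by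
    intro t ih1 ih2
    have hxt0 : 0 < x t := lt_of_lt_of_le hα ih1
    have hpow : ℓ ^ t ≤ 1 := pow_le_one₀ hℓ0 hℓ1.le
    have hlt : x t - α < δ := by nlinarith
    have hmem : x t ∈ Metric.ball α δ := by
      rw [Metric.mem_ball, Real.dist_eq, abs_of_nonneg (by linarith)]
      linarith
    have hrb : r (x t) < ℓ := hball hmem
    have heq : x (t + 1) - α = (x t - α) * r (x t) := by
      rw [hxrec t]; exact hstep (x t) hxt0
    have hrnn : 0 ≤ r (x t) := div_nonneg (hkeynn _ hxt0) (hppos _ hxt0).le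
    constructor
    · rw [heq]; exact mul_nonneg (by linarith) hrnn
    · rw [heq, mul_comm ℓ (x t - α)]
      exact mul_le_mul_of_nonneg_left hrb.le (by linarith)
  have main : ∀ t : ℕ, α ≤ x t ∧ x t - α ≤ ℓ ^ t * (x₀ - α) := by
    intro t
    induction t with
    | zero => exact ⟨hx0 ▸ hx₀l.le, by simp [hx0]⟩
    | succ t ih =>
      obtain ⟨ih1, ih2⟩ := ih
      obtain ⟨s1, s2⟩ := step t ih1 ih2
      refine ⟨by linarith, ?_⟩
      calc x (t + 1) - α ≤ ℓ * (x t - α) := s2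
        _ ≤ ℓ * (ℓ ^ t * (x₀ - α)) := mul_le_mul_of_nonneg_left ih2 hℓ0
        _ = ℓ ^ (t + 1) * (x₀ - α) := by ring
  refine ⟨fun t => step t (main t).1 (main t).2, ?_⟩
  have hg : Tendsto (fun t : ℕ => α + ℓ ^ t * (x₀ - α)) atTop (nhds α) := by
    have h1 := tendsto_pow_atTop_nhds_zero_of_lt_one hℓ0 hℓ1
    have h2 := (h1.mul_const (x₀ - α)).const_add α
    simpa using h2
  exact tendsto_of_tendsto_of_tendsto_of_le_of_le tendsto_const_nhds hg
    (fun t => (main t).1) (fun t => by linarith [(main t).2])
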